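/- (Varshamov–Gilbert bound) Let Ω = {0,1}^m with m > 8. Then there exists a subset {w^(0), w^(1), …, w^(M)} of Ω with w^(0) = (0,…,0), M ≥ 2^{m/8}, such that the Hamming distance between any two distinct elements w^(j), w^(k) is at least m/8. -/

import Mathlib

open Finset

private lemma hamming_ball_card (m q : ℕ) (w : Fin m → Bool) :
    ({v : Fin m → Bool | hammingDist v w ≤ q} : Finset _).card
      ≤ ∑ i ∈ range (q + 1), m.choose i := by
  classical
  have key : ({v : Fin m → Bool | hammingDist v w ≤ q} : Finset _).card ≤
      ((range (q + 1)).biUnion fun i => Finset.powersetCard i (univ : Finset (Fin m))).card := by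
    apply Finset.card_le_card_of_injOn
      (fun v : Fin m → Bool => ({j | v j ≠ w j} : Finset (Fin m)))
    · intro v hv
      simp only [Finset.mem_coe, Finset.mem_filter, Finset.mem_univ, true_and] at hv
      simp only [Finset.mem_coe, Finset.mem_biUnion, Finset.mem_range, Finset.mem_powersetCard]
      exact ⟨hammingDist v w, Nat.lt_succ_of_le hv, Finset.subset_univ _, rfl⟩
    · intro a _ b _ hab
      funext j
      have := Finset.ext_iff.mp hab j
      simp only [Finset.mem_filter, Finset.mem_univ, true_and] at this
      cases ha : a j <;> cases hb : b j <;> cases hw : w j <;> simp_all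
  refine key.trans ?_
  refine (Finset.card_biUnion_le).trans ?_
  apply Finset.sum_le_sum
  intro i _
  simp [Finset.card_powersetCard]

private lemma sum_choose_le (m q : ℕ) (hq : q ≤ m) :
    (∑ i ∈ range (q + 1), m.choose i) * 7 ^ (m - q) ≤ 8 ^ m := by
  calc (∑ i ∈ range (q + 1), m.choose i) * 7 ^ (m - q)
      = ∑ i ∈ range (q + 1), m.choose i * 7 ^ (m - q) := by rw [Finset.sum_mul]
    _ ≤ ∑ i ∈ range (q + 1), m.choose i * 7 ^ (m - i) := by
        refine Finset.sum_le_sum fun i hi => ?_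
        exact Nat.mul_le_mul_left _ (Nat.pow_le_pow_right (by norm_num)
          (Nat.sub_le_sub_left (Nat.lt_succ_iff.mp (mem_range.mp hi)) m))
    _ ≤ ∑ i ∈ range (m + 1), m.choose i * 7 ^ (m - i) := by
        apply Finset.sum_le_sum_of_subset
        exact Finset.range_subset_range.mpr (by omega)
    _ = 8 ^ m := by
        have h := add_pow 1 7 m (R := ℕ)
        simp only [one_pow, one_mul] at h
        rw [show (8:ℕ) = 1 + 7 by norm_num, h]
        exact Finset.sum_congr rfl fun i _ => by push_cast; ring

private lemma seven_pow (m : ℕ) (hm : 9 ≤ m) : 256 * 2 ^ (17 * m) ≤ 7 ^ (7 * m) := by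
  have h1 : (7:ℕ) ^ (7 * m) = 823543 ^ m := by
    rw [pow_mul]; norm_num
  have h2 : (2:ℕ) ^ (17 * m) = 131072 ^ m := by
    rw [pow_mul]; norm_num
  rw [h1, h2]
  calc 256 * 131072 ^ m ≤ 6 ^ m * 131072 ^ m := by
        have : 256 ≤ 6 ^ m := le_trans (by norm_num) (Nat.pow_le_pow_right (by norm_num) hm : (6:ℕ)^9 ≤ 6^m)
        exact Nat.mul_le_mul_right _ this
    _ = (6 * 131072) ^ m := (mul_pow 6 131072 m).symm
    _ ≤ 823543 ^ m := Nat.pow_le_pow_left (by norm_num) m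

theorem varshamov_gilbert (m : ℕ) (hm : 8 < m) :
    ∃ (M : ℕ) (w : Fin (M + 1) → Fin m → Bool),
      (2 : ℝ) ^ ((m : ℝ) / 8) ≤ (M : ℝ) ∧
      w 0 = (fun _ => false) ∧
      ∀ j k : Fin (M + 1), j ≠ k → (m : ℝ) / 8 ≤ (hammingDist (w j) (w k) : ℝ) := by
  classical
  set q : ℕ := m / 8 with hq
  set z : Fin m → Bool := fun _ => false with hz
  set good : Finset (Fin m → Bool) → Prop := fun S =>
    z ∈ S ∧ ∀ a ∈ S, ∀ b ∈ S, a ≠ b → q + 1 ≤ hammingDist a b with hgood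
  have h0 : good {z} := by
    constructor
    · exact mem_singleton_self z
    · intro a ha b hb hab
      rw [mem_singleton] at ha hb
      exact absurd (ha.trans hb.symm) hab
  obtain ⟨S, hSmem, hmax⟩ := Finset.exists_max_image
    ((univ : Finset (Finset (Fin m → Bool))).filter good) Finset.card
    ⟨{z}, Finset.mem_filter.mpr ⟨Finset.mem_univ _, h0⟩⟩
  rw [mem_filter] at hSmem
  obtain ⟨-, hzS, hdist⟩ := hSmem
  -- covering
  have hcover : ∀ v : Fin m → Bool, ∃ u ∈ S, hammingDist v u ≤ q := by
    intro v
    by_contra hcon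
    push_neg at hcon
    have hvS : v ∉ S := fun hv => by
      have := hcon v hv
      simp [hammingDist_self] at this
    have hgood' : good (insert v S) := by
      refine ⟨Finset.mem_insert_of_mem hzS, ?_⟩
      intro a ha b hb hab
      rw [Finset.mem_insert] at ha hb
      rcases ha with ha | ha <;> rcases hb with hb | hb
      · exact absurd (ha.trans hb.symm) hab
      · subst ha; exact hcon b hb
      · subst hb; rw [hammingDist_comm]; exact hcon a ha
      · exact hdist a ha b hb hab
    have := hmax (insert v S) (Finset.mem_filter.mpr ⟨Finset.mem_univ _, hgood'⟩)
    rw [Finset.card_insert_of_notMem hvS] at this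
    omega
  -- counting
  have hcount : 2 ^ m ≤ S.card * ∑ i ∈ range (q + 1), m.choose i := by
    have hsub : (univ : Finset (Fin m → Bool)) ⊆
        S.biUnion fun u => ({v : Fin m → Bool | hammingDist v u ≤ q} : Finset _) := by
      intro v _
      obtain ⟨u, hu, huv⟩ := hcover v
      exact Finset.mem_biUnion.mpr ⟨u, hu, by simp [huv]⟩
    calc (2:ℕ) ^ m = Fintype.card (Fin m → Bool) := by simp
      _ ≤ (S.biUnion fun u => ({v : Fin m → Bool | hammingDist v u ≤ q} : Finset _)).card :=
          by rw [← Finset.card_univ]; exact Finset.card_le_card hsub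
      _ ≤ ∑ u ∈ S, ({v : Fin m → Bool | hammingDist v u ≤ q} : Finset _).card :=
          Finset.card_biUnion_le
      _ ≤ ∑ _u ∈ S, ∑ i ∈ range (q + 1), m.choose i :=
          Finset.sum_le_sum fun u _ => hamming_ball_card m q u
      _ = S.card * ∑ i ∈ range (q + 1), m.choose i := by
          rw [Finset.sum_const, smul_eq_mul]
  set c : ℕ := S.card with hc
  have hc1 : 1 ≤ c := Finset.card_pos.mpr ⟨z, hzS⟩
  -- key nat inequality : 256 * 2^m ≤ c^8
  have hkey : 256 * 2 ^ m ≤ c ^ 8 := by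
    have h1 : 2 ^ m * 7 ^ (m - q) ≤ c * 8 ^ m := by
      calc 2 ^ m * 7 ^ (m - q)
          ≤ (c * ∑ i ∈ range (q + 1), m.choose i) * 7 ^ (m - q) :=
            Nat.mul_le_mul_right _ hcount
        _ = c * ((∑ i ∈ range (q + 1), m.choose i) * 7 ^ (m - q)) := by ring
        _ ≤ c * 8 ^ m := Nat.mul_le_mul_left _ (sum_choose_le m q (by omega))
    have h2 : (2 ^ m * 7 ^ (m - q)) ^ 8 ≤ (c * 8 ^ m) ^ 8 := Nat.pow_le_pow_left h1 8
    have h3 : 256 * 2 ^ m * 8 ^ (8 * m) ≤ (2 ^ m * 7 ^ (m - q)) ^ 8 := by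
      have hq8 : 8 * q ≤ m := by omega
      have h7 : 7 * m ≤ 8 * (m - q) := by omega
      have e8 : (8:ℕ) ^ (8 * m) = 2 ^ (24 * m) := by
        rw [show (8:ℕ) = 2 ^ 3 by norm_num, ← pow_mul]
        congr 1; ring
      calc 256 * 2 ^ m * 8 ^ (8 * m)
          = 256 * 2 ^ (17 * m) * 2 ^ (8 * m) := by
            rw [e8, mul_assoc, mul_assoc, ← pow_add, ← pow_add]
            congr 2; ring
        _ ≤ 7 ^ (7 * m) * 2 ^ (8 * m) :=
            Nat.mul_le_mul_right _ (seven_pow m (by omega))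
        _ ≤ 7 ^ (8 * (m - q)) * 2 ^ (8 * m) :=
            Nat.mul_le_mul_right _ (Nat.pow_le_pow_right (by norm_num) h7)
        _ = (2 ^ m * 7 ^ (m - q)) ^ 8 := by
            rw [mul_pow, ← pow_mul, ← pow_mul, Nat.mul_comm m 8, Nat.mul_comm (m - q) 8,
              Nat.mul_comm (2 ^ (8 * m)) (7 ^ (8 * (m - q)))]
    have h4 : 256 * 2 ^ m * 8 ^ (8 * m) ≤ c ^ 8 * 8 ^ (8 * m) := by
      calc 256 * 2 ^ m * 8 ^ (8 * m) ≤ (2 ^ m * 7 ^ (m - q)) ^ 8 := h3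
        _ ≤ (c * 8 ^ m) ^ 8 := h2
        _ = c ^ 8 * 8 ^ (8 * m) := by rw [mul_pow, ← pow_mul, Nat.mul_comm m 8]
    exact Nat.le_of_mul_le_mul_right h4 (Nat.pow_pos (by norm_num))
  -- real bound : 2^(m/8) ≤ c - 1
  set t : ℝ := (2 : ℝ) ^ ((m : ℝ) / 8) with ht
  have ht_pos : 0 < t := Real.rpow_pos_of_pos (by norm_num) _
  have ht8 : t ^ (8:ℕ) = 2 ^ m := by
    have hexp : (m:ℝ) / 8 * ((8:ℕ):ℝ) = ((m:ℕ):ℝ) := by push_cast; ring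
    rw [ht, ← Real.rpow_natCast ((2:ℝ) ^ ((m:ℝ)/8)) 8, ← Real.rpow_mul (by norm_num),
      hexp, Real.rpow_natCast]
  have h2t : 2 * t ≤ (c : ℝ) := by
    have h8 : (2 * t) ^ (8:ℕ) ≤ (c : ℝ) ^ (8:ℕ) := by
      rw [mul_pow, ht8]
      calc (2:ℝ)^(8:ℕ) * 2 ^ m = ((256 * 2 ^ m : ℕ) : ℝ) := by push_cast; norm_num
        _ ≤ ((c ^ 8 : ℕ) : ℝ) := by exact_mod_cast hkey
        _ = (c : ℝ) ^ (8:ℕ) := by push_cast; ring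
    exact le_of_pow_le_pow_left₀ (by norm_num) (by positivity) h8
  have ht1 : 1 ≤ t := by
    rw [ht, show (1:ℝ) = (2:ℝ) ^ (0:ℝ) by simp]
    exact Real.rpow_le_rpow_of_exponent_le (by norm_num) (by positivity)
  refine ⟨c - 1, ?_⟩
  have hM1 : c - 1 + 1 = c := by omega
  -- enumeration of S with 0 ↦ z
  have hcard_erase : (S.erase z).card = c - 1 := by
    rw [Finset.card_erase_of_mem hzS]
  let e : Fin (c - 1) → (Fin m → Bool) := fun i =>
    ((S.erase z).equivFin.symm (Fin.cast hcard_erase.symm i) : _)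
  have heS : ∀ i, e i ∈ S.erase z := fun i => ((S.erase z).equivFin.symm _).2
  have heinj : Function.Injective e := by
    intro i j hij
    have := Subtype.ext hij
    have := (S.erase z).equivFin.symm.injective this
    simpa [Fin.ext_iff] using this
  let w : Fin (c - 1 + 1) → Fin m → Bool := Fin.cases z e
  have hwS : ∀ j, w j ∈ S := by
    intro j
    induction j using Fin.cases with
    | zero => simpa [w] using hzS
    | succ i => exact Finset.mem_of_mem_erase (heS i)
  have hwinj : Function.Injective w := by
    intro j k hjk
    induction j using Fin.cases with
    | zero =>
      induction k using Fin.cases with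
      | zero => rfl
      | succ i =>
        exact absurd hjk.symm (Finset.ne_of_mem_erase (heS i))
    | succ i =>
      induction k using Fin.cases with
      | zero => exact absurd hjk (Finset.ne_of_mem_erase (heS i))
      | succ i' => exact congrArg Fin.succ (heinj hjk)
  refine ⟨w, ?_, ?_, ?_⟩
  · -- size bound
    have hMc : ((c : ℝ) - 1) = ((c - 1 : ℕ) : ℝ) := by
      push_cast [hc1]; ring
    calc t ≤ 2 * t - 1 := by linarith
      _ ≤ (c : ℝ) - 1 := by linarith
      _ = ((c - 1 : ℕ) : ℝ) := hMc
  · simp [w, z]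
  · intro j k hjk
    have hne : w j ≠ w k := fun h => hjk (hwinj h)
    have hd : q + 1 ≤ hammingDist (w j) (w k) := hdist _ (hwS j) _ (hwS k) hne
    have hq' : (m : ℝ) / 8 ≤ ((q : ℝ) + 1) := by
      have : m < 8 * (q + 1) := by omega
      have : (m : ℝ) < 8 * ((q : ℝ) + 1) := by exact_mod_cast this
      linarith
    calc (m : ℝ) / 8 ≤ ((q : ℝ) + 1) := hq'
      _ ≤ (hammingDist (w j) (w k) : ℝ) := by exact_mod_cast hd
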